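/- Let R be invertible with RᵀR = H = XᵀX for full-column-rank X, and ΔW ∈ ℝ^{m×n} with SVD of R ΔW given by U Σ Vᵀ. Setting A = R⁻¹ U_{:r} Σ_{:r} and B = V_{:r} yields A Bᵀ = R⁻¹ LR_r(R ΔW), so (A, B) is an optimal solution of min ‖X(A Bᵀ − ΔW)‖²_F. -/

import Mathlib

open Matrix

/-- Frobenius norm squared: `‖A‖²_F = Tr(Aᵀ A)`. -/
noncomputable def frobSq {m n : ℕ} (A : Matrix (Fin m) (Fin n) ℝ) : ℝ :=
  Matrix.trace (Aᵀ * A)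

lemma exists_proj {m r : ℕ} (C : Matrix (Fin m) (Fin r) ℝ) :
    ∃ (k : ℕ) (Q : Matrix (Fin m) (Fin k) ℝ), k ≤ r ∧ Qᵀ * Q = 1 ∧ Q * Qᵀ * C = C := by
  classical
  set E := EuclideanSpace ℝ (Fin m)
  set col : Fin r → E := fun a => WithLp.toLp 2 (fun i => C i a) with hcol
  set W : Submodule ℝ E := Submodule.span ℝ (Set.range col) with hW
  have hk : Module.finrank ℝ W ≤ r := by
    simpa [Set.finrank] using finrank_range_le_card (R := ℝ) col
  set k := Module.finrank ℝ W with hkdef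
  set b := stdOrthonormalBasis ℝ W with hb
  set Q : Matrix (Fin m) (Fin k) ℝ := fun i a => ((b a : W) : E) i with hQ
  have hinner : ∀ x y : W, @inner ℝ _ _ x y = ∑ i : Fin m, ((x : E) i) * ((y : E) i) := by
    intro x y
    rw [Submodule.coe_inner]
    simp [E, PiLp.inner_apply, RCLike.inner_apply, mul_comm]
  refine ⟨k, Q, hk, ?_, ?_⟩
  · ext a c
    have horth := orthonormal_iff_ite.mp b.orthonormal a c
    rw [hinner] at horth
    simp only [Matrix.mul_apply, Matrix.transpose_apply, Matrix.one_apply]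
    rw [← horth]
  · ext i a
    have hmem : col a ∈ W := Submodule.subset_span (Set.mem_range_self a)
    set xW : W := ⟨col a, hmem⟩ with hxW
    have hexp := b.sum_repr' xW
    set L : W →ₗ[ℝ] ℝ :=
      ((EuclideanSpace.proj i : E →L[ℝ] ℝ).toLinearMap).comp W.subtype with hL
    have hcoe := congrArg L hexp
    rw [map_sum] at hcoe
    have hLval : ∀ z : W, L z = (z : E) i := fun z => rfl
    have hcoe2 : ∑ c : Fin k, (@inner ℝ _ _ (b c) xW) * Q i c = C i a := by
      have hCi : C i a = L xW := rfl
      rw [hCi, ← hcoe]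
      exact Finset.sum_congr rfl fun c _ => by
        rw [L.map_smul]; rw [hLval]; rfl
    have hrepr : ∀ c : Fin k, @inner ℝ _ _ (b c) xW = ∑ j : Fin m, Q j c * C j a := by
      intro c
      rw [hinner]
    simp only [Matrix.mul_apply, Matrix.transpose_apply]
    calc ∑ j, (∑ c, Q i c * Q j c) * C j a
        = ∑ j, ∑ c, Q i c * Q j c * C j a := by
          simp [Finset.sum_mul]
      _ = ∑ c, ∑ j, Q i c * Q j c * C j a := Finset.sum_comm
      _ = ∑ c, (∑ j, Q j c * C j a) * Q i c := by
          congr 1; ext c; rw [Finset.sum_mul]; congr 1; ext j; ring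
      _ = C i a := by
          rw [← hcoe2]
          exact Finset.sum_congr rfl fun c _ => by rw [hrepr c]

lemma frobSq_nonneg {m n : ℕ} (A : Matrix (Fin m) (Fin n) ℝ) : 0 ≤ frobSq A := by
  unfold frobSq Matrix.trace
  refine Finset.sum_nonneg fun j _ => ?_
  simp only [Matrix.diag_apply, Matrix.mul_apply, Matrix.transpose_apply]
  exact Finset.sum_nonneg fun i _ => mul_self_nonneg _

lemma frobSq_eq_trace' {m n : ℕ} (A : Matrix (Fin m) (Fin n) ℝ) :
    frobSq A = Matrix.trace (A * Aᵀ) := Matrix.trace_mul_comm _ _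

lemma frobSq_neg {m n : ℕ} (A : Matrix (Fin m) (Fin n) ℝ) : frobSq (-A) = frobSq A := by
  simp [frobSq]

lemma frobSq_orthL {m n : ℕ} (U : Matrix (Fin m) (Fin m) ℝ) (hU : Uᵀ * U = 1)
    (M : Matrix (Fin m) (Fin n) ℝ) : frobSq (U * M) = frobSq M := by
  unfold frobSq
  rw [Matrix.transpose_mul]
  rw [show Mᵀ * Uᵀ * (U * M) = Mᵀ * (Uᵀ * U) * M by
    simp only [Matrix.mul_assoc]]
  rw [hU, Matrix.mul_one]

lemma frobSq_orthR {m n : ℕ} (V : Matrix (Fin n) (Fin n) ℝ) (hV : Vᵀ * V = 1)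
    (M : Matrix (Fin m) (Fin n) ℝ) : frobSq (M * Vᵀ) = frobSq M := by
  unfold frobSq
  rw [Matrix.transpose_mul, Matrix.transpose_transpose]
  rw [show V * Mᵀ * (M * Vᵀ) = V * (Mᵀ * M) * Vᵀ by simp only [Matrix.mul_assoc]]
  rw [Matrix.trace_mul_comm, show Vᵀ * (V * (Mᵀ * M)) = (Vᵀ * V) * (Mᵀ * M) by
    simp only [Matrix.mul_assoc], hV, Matrix.one_mul]

/-- product of a "diagonal-ish" rectangular matrix with its transpose. -/
lemma diag_rect_mul_transpose {m n : ℕ} (f : ℕ → ℝ) (M : Matrix (Fin m) (Fin n) ℝ)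
    (hM : ∀ i j, M i j = if (i : ℕ) = (j : ℕ) then f i else 0) :
    M * Mᵀ = Matrix.diagonal (fun i : Fin m => if (i : ℕ) < n then (f i)^2 else 0) := by
  ext i i'
  simp only [Matrix.mul_apply, Matrix.transpose_apply, Matrix.diagonal_apply]
  by_cases hin : (i : ℕ) < n
  · rw [Finset.sum_eq_single (⟨(i : ℕ), hin⟩ : Fin n)]
    · simp only [hM]
      by_cases hii : i = i'
      · subst hii; simp [hin, pow_two]
      · have h2 : ¬ ((i' : ℕ) = (i : ℕ)) := fun h => hii (Fin.ext h).symm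
        simp [hii, h2]
    · intro j _ hj
      have : ¬ ((i : ℕ) = (j : ℕ)) := fun h => hj (by ext; simp [← h])
      simp [hM, this]
    · intro h; exact absurd (Finset.mem_univ _) h
  · rw [Finset.sum_eq_zero]
    · by_cases hii : i = i'
      · subst hii; simp [hin]
      · rw [if_neg hii]
    · intro j _
      have : ¬ ((i : ℕ) = (j : ℕ)) := fun h => hin (h ▸ j.isLt)
      simp [hM, this]

lemma weighted_sum_le (m r : ℕ) (t w : Fin m → ℝ)
    (ht0 : ∀ i, 0 ≤ t i) (hmono : ∀ i j : Fin m, i ≤ j → t j ≤ t i)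
    (hw0 : ∀ i, 0 ≤ w i) (hw1 : ∀ i, w i ≤ 1) (hws : ∑ i, w i ≤ (r : ℝ)) :
    ∑ i, w i * t i ≤ ∑ i : Fin m, if (i : ℕ) < r then t i else 0 := by
  by_cases hmr : m ≤ r
  · have : ∀ i : Fin m, (if (i : ℕ) < r then t i else 0) = t i := by
      intro i; rw [if_pos (lt_of_lt_of_le i.isLt hmr)]
    rw [Finset.sum_congr rfl fun i _ => this i]
    exact Finset.sum_le_sum fun i _ => by
      have := ht0 i; have := hw1 i; nlinarith
  · push_neg at hmr
    set τ := t ⟨r, hmr⟩ with hτ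
    have hτ0 : 0 ≤ τ := ht0 _
    have key : ∀ i : Fin m, w i * t i ≤
        ((if (i : ℕ) < r then t i else 0) - (if (i : ℕ) < r then τ else 0)) + w i * τ := by
      intro i
      by_cases hir : (i : ℕ) < r
      · have hti : τ ≤ t i := hmono i ⟨r, hmr⟩ (by simp [Fin.le_def]; omega)
        rw [if_pos hir, if_pos hir]
        have := hw1 i; have := hw0 i; nlinarith
      · have hti : t i ≤ τ := hmono ⟨r, hmr⟩ i (by simp [Fin.le_def]; omega)
        rw [if_neg hir, if_neg hir]
        have := hw0 i; nlinarith
    have hsum := Finset.sum_le_sum fun i (_ : i ∈ Finset.univ) => key i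
    rw [Finset.sum_add_distrib, Finset.sum_sub_distrib] at hsum
    have hcτ : ∑ i : Fin m, (if (i : ℕ) < r then τ else 0) = r * τ := by
      rw [Fin.sum_univ_eq_sum_range (fun k => if k < r then τ else 0) m]
      rw [← Finset.sum_filter]
      have : (Finset.range m).filter (· < r) = Finset.range r := by
        ext k; simp [Finset.mem_filter]; omega
      rw [this, Finset.sum_const, Finset.card_range, nsmul_eq_mul]
    have hwτ : ∑ i : Fin m, w i * τ ≤ r * τ := by
      rw [← Finset.sum_mul]
      exact mul_le_mul_of_nonneg_right hws hτ0
    calc ∑ i, w i * t i ≤ _ := hsum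
      _ ≤ (∑ i : Fin m, if (i : ℕ) < r then t i else 0) - r * τ + r * τ := by
          rw [hcτ]; linarith
      _ = _ := by ring


lemma eckart_young_diag {m n r : ℕ}
    (σ : ℕ → ℝ) (hσnn : ∀ i, 0 ≤ σ i) (hσmono : ∀ i j, i ≤ j → σ j ≤ σ i)
    (S Sr : Matrix (Fin m) (Fin n) ℝ)
    (hS : ∀ i j, S i j = if (i : ℕ) = (j : ℕ) then σ (i : ℕ) else 0)
    (hSr : ∀ i j, Sr i j = if (i : ℕ) = (j : ℕ) ∧ (i : ℕ) < r then σ (i : ℕ) else 0)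
    (C : Matrix (Fin m) (Fin r) ℝ) (D : Matrix (Fin n) (Fin r) ℝ) :
    frobSq (Sr - S) ≤ frobSq (C * Dᵀ - S) := by
  classical
  obtain ⟨k, Q, hk, hQ1, hQC⟩ := exists_proj C
  set P := Q * Qᵀ with hP
  have hPt : Pᵀ = P := by rw [hP, Matrix.transpose_mul, Matrix.transpose_transpose]
  have hPP : P * P = P := by
    rw [hP]
    calc Q * Qᵀ * (Q * Qᵀ) = Q * (Qᵀ * Q) * Qᵀ := by simp only [Matrix.mul_assoc]
      _ = Q * Qᵀ := by rw [hQ1, Matrix.mul_one]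
  have h1P : (1 - P)ᵀ * (1 - P) = 1 - P := by
    rw [Matrix.transpose_sub, Matrix.transpose_one, hPt, Matrix.sub_mul,
      Matrix.mul_sub, Matrix.mul_sub, hPP]
    simp only [Matrix.one_mul, Matrix.mul_one]
    abel
  -- the pythagoras identity
  have key1 : ∀ M : Matrix (Fin m) (Fin n) ℝ,
      frobSq M = frobSq ((1 - P) * M) + frobSq (Qᵀ * M) := by
    intro M
    have e1 : ((1 - P) * M)ᵀ * ((1 - P) * M) = Mᵀ * M - Mᵀ * (Q * (Qᵀ * M)) := by
      rw [Matrix.transpose_mul]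
      calc Mᵀ * (1 - P)ᵀ * ((1 - P) * M) = Mᵀ * ((1 - P)ᵀ * (1 - P)) * M := by
            simp only [Matrix.mul_assoc]
        _ = Mᵀ * (1 - P) * M := by rw [h1P]
        _ = Mᵀ * M - Mᵀ * (Q * (Qᵀ * M)) := by
            rw [Matrix.mul_sub, Matrix.sub_mul, Matrix.mul_one, hP]
            simp only [Matrix.mul_assoc]
    have e2 : (Qᵀ * M)ᵀ * (Qᵀ * M) = Mᵀ * (Q * (Qᵀ * M)) := by
      rw [Matrix.transpose_mul, Matrix.transpose_transpose, Matrix.mul_assoc]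
    unfold frobSq
    rw [e1, e2, Matrix.trace_sub]
    ring
  set t : Fin m → ℝ := fun i => if (i : ℕ) < n then (σ (i : ℕ))^2 else 0 with ht
  have hSS : S * Sᵀ = Matrix.diagonal t := diag_rect_mul_transpose σ S hS
  have hdiff : ∀ i j, (Sr - S) i j =
      if (i : ℕ) = (j : ℕ) then (if (i : ℕ) < r then 0 else -σ (i : ℕ)) else 0 := by
    intro i j
    rw [Matrix.sub_apply, hS, hSr]
    by_cases hij : (i : ℕ) = (j : ℕ)
    · rw [if_pos hij]
      by_cases hir : (i : ℕ) < r
      · rw [if_pos ⟨hij, hir⟩, if_pos hij, if_pos hir]; ring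
      · rw [if_neg (fun h : _ ∧ _ => hir h.2), if_pos hij, if_neg hir]; ring
    · rw [if_neg (fun h : _ ∧ _ => hij h.1), if_neg hij, if_neg hij]; ring
  have hDD := diag_rect_mul_transpose (fun x => if x < r then 0 else -σ x) (Sr - S) hdiff
  -- frobSq value of Sr - S
  have hfrob_diff : frobSq (Sr - S) =
      ∑ i : Fin m, (t i - if (i : ℕ) < r then t i else 0) := by
    rw [frobSq_eq_trace', hDD, Matrix.trace_diagonal]
    refine Finset.sum_congr rfl fun i _ => ?_
    by_cases hin : (i : ℕ) < n <;> by_cases hir : (i : ℕ) < r <;>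
      simp [ht, hin, hir]
  have hfrobS : frobSq S = ∑ i : Fin m, t i := by
    rw [frobSq_eq_trace', hSS, Matrix.trace_diagonal]
  -- w facts
  set w : Fin m → ℝ := fun i => P i i with hw
  have hw0 : ∀ i, 0 ≤ w i := by
    intro i
    simp only [hw, hP, Matrix.mul_apply, Matrix.transpose_apply]
    exact Finset.sum_nonneg fun a _ => mul_self_nonneg _
  have hPsym : ∀ i j, P j i = P i j := by
    intro i j
    conv_lhs => rw [← hPt]
    rfl
  have hw1 : ∀ i, w i ≤ 1 := by
    intro i
    have h1 : w i = ∑ j : Fin m, (P i j)^2 := by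
      conv_lhs => rw [hw]; rw [← hPP]
      simp only [Matrix.mul_apply]
      exact Finset.sum_congr rfl fun j _ => by rw [hPsym i j, pow_two]
    have h2 : (P i i)^2 ≤ ∑ j : Fin m, (P i j)^2 :=
      Finset.single_le_sum (f := fun j => (P i j)^2) (fun j _ => sq_nonneg _)
        (Finset.mem_univ i)
    have := hw0 i
    nlinarith [h2, h1]
  have hws : ∑ i, w i = (k : ℝ) := by
    have : ∑ i, w i = Matrix.trace P := rfl
    rw [this, hP, Matrix.trace_mul_comm, hQ1, Matrix.trace_one]
    simp
  -- frobSq (Qᵀ S) = ∑ w t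
  have hfrobQS : frobSq (Qᵀ * S) = ∑ i : Fin m, w i * t i := by
    unfold frobSq
    rw [Matrix.transpose_mul, Matrix.transpose_transpose]
    rw [show Sᵀ * Q * (Qᵀ * S) = Sᵀ * (P * S) by rw [hP]; simp only [Matrix.mul_assoc]]
    rw [Matrix.trace_mul_comm, Matrix.mul_assoc, hSS]
    simp only [Matrix.trace, Matrix.diag_apply, Matrix.mul_diagonal]
    rfl
  have hneg : (1 - P) * (C * Dᵀ - S) = -((1 - P) * S) := by
    rw [Matrix.mul_sub]
    have hz : (1 - P) * (C * Dᵀ) = 0 := by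
      rw [show (1 - P) * (C * Dᵀ) = ((1 - P) * C) * Dᵀ from (Matrix.mul_assoc _ _ _).symm]
      rw [Matrix.sub_mul, Matrix.one_mul, hQC, sub_self, Matrix.zero_mul]
    rw [hz, zero_sub]
  have ht0 : ∀ i, 0 ≤ t i := fun i => by
    by_cases h : (i : ℕ) < n <;> simp [ht, h, sq_nonneg]
  have htmono : ∀ i j : Fin m, i ≤ j → t j ≤ t i := by
    intro i j hij
    have hijn : (i : ℕ) ≤ (j : ℕ) := hij
    by_cases hjn : (j : ℕ) < n
    · have hin : (i : ℕ) < n := lt_of_le_of_lt hijn hjn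
      simp only [ht, if_pos hjn, if_pos hin]
      have h1 := hσmono _ _ hijn
      have h2 := hσnn (j : ℕ)
      nlinarith
    · simp only [ht, if_neg hjn]
      exact ht0 i
  have hwsum : ∑ i, w i ≤ (r : ℝ) := by rw [hws]; exact_mod_cast hk
  have hweight := weighted_sum_le m r t w ht0 htmono hw0 hw1 hwsum
  calc frobSq (Sr - S)
      = ∑ i : Fin m, (t i - if (i : ℕ) < r then t i else 0) := hfrob_diff
    _ = (∑ i : Fin m, t i) - ∑ i : Fin m, (if (i : ℕ) < r then t i else 0) :=
        Finset.sum_sub_distrib _ _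
    _ ≤ (∑ i : Fin m, t i) - ∑ i : Fin m, w i * t i := by linarith [hweight]
    _ = frobSq S - frobSq (Qᵀ * S) := by rw [hfrobS, hfrobQS]
    _ = frobSq ((1 - P) * S) := by have := key1 S; linarith
    _ = frobSq ((1 - P) * (C * Dᵀ - S)) := by rw [hneg, frobSq_neg]
    _ ≤ frobSq (C * Dᵀ - S) := by
        have h1 := key1 (C * Dᵀ - S)
        have h2 := frobSq_nonneg (Qᵀ * (C * Dᵀ - S))
        linarith

lemma truncation_eq {m n r : ℕ} (hrm : r ≤ m) (hrn : r ≤ n) (σ : ℕ → ℝ)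
    (U : Matrix (Fin m) (Fin m) ℝ) (V : Matrix (Fin n) (Fin n) ℝ)
    (Sr : Matrix (Fin m) (Fin n) ℝ)
    (hSr : ∀ i j, Sr i j = if (i : ℕ) = (j : ℕ) ∧ (i : ℕ) < r then σ (i : ℕ) else 0) :
    U.submatrix id (Fin.castLE hrm) * Matrix.diagonal (fun i : Fin r => σ (i : ℕ)) *
      (V.submatrix id (Fin.castLE hrn))ᵀ = U * Sr * Vᵀ := by
  classical
  set K : Matrix (Fin m) (Fin r) ℝ :=
    Matrix.of (fun i a => if (i : ℕ) = (a : ℕ) then σ (i : ℕ) else 0) with hK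
  set J : Matrix (Fin r) (Fin n) ℝ :=
    Matrix.of (fun a j => if (a : ℕ) = (j : ℕ) then (1 : ℝ) else 0) with hJ
  have h1 : Sr = K * J := by
    ext i j
    rw [hSr, Matrix.mul_apply]
    by_cases hir : (i : ℕ) < r
    · rw [Finset.sum_eq_single (⟨(i : ℕ), hir⟩ : Fin r)]
      · by_cases hij : (i : ℕ) = (j : ℕ) <;> simp [hK, hJ, hij, hir] <;>
          (intro h; exfalso; omega)
      · intro a _ ha
        have : ¬ ((i : ℕ) = (a : ℕ)) := fun h => ha (by ext; simp [← h])
        simp [hK, this]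
      · intro h; exact absurd (Finset.mem_univ _) h
    · rw [if_neg (fun h : _ ∧ _ => hir h.2), Finset.sum_eq_zero]
      intro a _
      have : ¬ ((i : ℕ) = (a : ℕ)) := fun h => hir (h ▸ a.isLt)
      simp [hK, this]
  have h2 : U * K = U.submatrix id (Fin.castLE hrm) *
      Matrix.diagonal (fun i : Fin r => σ (i : ℕ)) := by
    ext i a
    rw [Matrix.mul_apply, Matrix.mul_diagonal, Matrix.submatrix_apply]
    rw [Finset.sum_eq_single (Fin.castLE hrm a)]
    · simp [hK, Fin.castLE]
    · intro k _ hk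
      have : ¬ ((k : ℕ) = (a : ℕ)) := fun h => hk (by ext; simp [h, Fin.castLE])
      simp [hK, this]
    · intro h; exact absurd (Finset.mem_univ _) h
  have h3 : J * Vᵀ = (V.submatrix id (Fin.castLE hrn))ᵀ := by
    ext a j
    rw [Matrix.mul_apply, Matrix.transpose_apply, Matrix.submatrix_apply]
    rw [Finset.sum_eq_single (Fin.castLE hrn a)]
    · simp [hJ, Fin.castLE]
    · intro l _ hl
      have : ¬ ((a : ℕ) = (l : ℕ)) := fun h => hl (by ext; simp [← h, Fin.castLE])
      simp [hJ, this]
    · intro h; exact absurd (Finset.mem_univ _) h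
  calc U.submatrix id (Fin.castLE hrm) * Matrix.diagonal (fun i : Fin r => σ (i : ℕ)) *
        (V.submatrix id (Fin.castLE hrn))ᵀ
      = (U * K) * (J * Vᵀ) := by rw [h2, h3]
    _ = U * Sr * Vᵀ := by rw [h1]; simp only [Matrix.mul_assoc]

/-- With `RᵀR = XᵀX` for full-column-rank `X` and an SVD `R ΔW = U Σ Vᵀ`,
setting `A = R⁻¹ U_{:r} Σ_{:r}` and `B = V_{:r}` yields
`A Bᵀ = R⁻¹ LR_r(R ΔW)` (where `LR_r(R ΔW) = U Σ_{:r-truncated} Vᵀ`), and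
`(A, B)` is an optimal solution of `min ‖X(A Bᵀ − ΔW)‖²_F`. -/
theorem stmt14 {p m n r : ℕ} (hrm : r ≤ m) (hrn : r ≤ n)
    (X : Matrix (Fin p) (Fin m) ℝ) (hX : X.rank = m)
    (R : Matrix (Fin m) (Fin m) ℝ) (hR : IsUnit R) (hH : Rᵀ * R = Xᵀ * X)
    (ΔW : Matrix (Fin m) (Fin n) ℝ)
    (U : Matrix (Fin m) (Fin m) ℝ) (V : Matrix (Fin n) (Fin n) ℝ)
    (σ : ℕ → ℝ)
    (hU₁ : Uᵀ * U = 1) (hU₂ : U * Uᵀ = 1)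
    (hV₁ : Vᵀ * V = 1) (hV₂ : V * Vᵀ = 1)
    (hσnn : ∀ i, 0 ≤ σ i) (hσmono : ∀ i j, i ≤ j → σ j ≤ σ i)
    (S : Matrix (Fin m) (Fin n) ℝ)
    (hS : ∀ i j, S i j = if (i : ℕ) = (j : ℕ) then σ (i : ℕ) else 0)
    (hSVD : R * ΔW = U * S * Vᵀ)
    (Sr : Matrix (Fin m) (Fin n) ℝ)
    (hSr : ∀ i j, Sr i j =
      if (i : ℕ) = (j : ℕ) ∧ (i : ℕ) < r then σ (i : ℕ) else 0)
    (A : Matrix (Fin m) (Fin r) ℝ) (B : Matrix (Fin n) (Fin r) ℝ)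
    (hA : A = R⁻¹ * U.submatrix id (Fin.castLE hrm) *
      Matrix.diagonal (fun i : Fin r => σ (i : ℕ)))
    (hB : B = V.submatrix id (Fin.castLE hrn)) :
    A * Bᵀ = R⁻¹ * (U * Sr * Vᵀ) ∧
    ∀ (A' : Matrix (Fin m) (Fin r) ℝ) (B' : Matrix (Fin n) (Fin r) ℝ),
      frobSq (X * (A * Bᵀ - ΔW)) ≤ frobSq (X * (A' * B'ᵀ - ΔW)) := by
  have htrunc := truncation_eq hrm hrn σ U V Sr hSr
  have hpart1 : A * Bᵀ = R⁻¹ * (U * Sr * Vᵀ) := by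
    calc A * Bᵀ = R⁻¹ * (U.submatrix id (Fin.castLE hrm) *
          (Matrix.diagonal (fun i : Fin r => σ (i : ℕ)) *
            (V.submatrix id (Fin.castLE hrn))ᵀ)) := by
          rw [hA, hB]; simp only [Matrix.mul_assoc]
      _ = R⁻¹ * (U * Sr * Vᵀ) := by rw [← htrunc]; simp only [Matrix.mul_assoc]
  refine ⟨hpart1, fun A' B' => ?_⟩
  have hRdet : IsUnit R.det := (Matrix.isUnit_iff_isUnit_det R).mp hR
  have hRRi : R * R⁻¹ = 1 := Matrix.mul_nonsing_inv R hRdet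
  have hXR : ∀ M : Matrix (Fin m) (Fin n) ℝ, frobSq (X * M) = frobSq (R * M) := by
    intro M
    unfold frobSq
    rw [Matrix.transpose_mul, Matrix.transpose_mul,
      show Mᵀ * Xᵀ * (X * M) = Mᵀ * (Xᵀ * X) * M by simp only [Matrix.mul_assoc],
      show Mᵀ * Rᵀ * (R * M) = Mᵀ * (Rᵀ * R) * M by simp only [Matrix.mul_assoc], hH]
  have hL : frobSq (X * (A * Bᵀ - ΔW)) = frobSq (Sr - S) := by
    rw [hXR, Matrix.mul_sub, hpart1, hSVD,
      show R * (R⁻¹ * (U * Sr * Vᵀ)) = U * Sr * Vᵀ by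
        rw [← Matrix.mul_assoc, hRRi, Matrix.one_mul],
      show U * Sr * Vᵀ - U * S * Vᵀ = U * ((Sr - S) * Vᵀ) by
        rw [Matrix.sub_mul, Matrix.mul_sub]; simp only [Matrix.mul_assoc],
      frobSq_orthL U hU₁, frobSq_orthR V hV₁]
  set C : Matrix (Fin m) (Fin r) ℝ := Uᵀ * (R * A') with hC
  set D : Matrix (Fin n) (Fin r) ℝ := Vᵀ * B' with hD
  have hRA : R * (A' * B'ᵀ) = U * ((C * Dᵀ) * Vᵀ) := by
    rw [hC, hD, Matrix.transpose_mul, Matrix.transpose_transpose]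
    calc R * (A' * B'ᵀ)
        = U * (Uᵀ * (R * (A' * (B'ᵀ * (V * Vᵀ))))) := by
          rw [hV₂, Matrix.mul_one, ← Matrix.mul_assoc U Uᵀ _, hU₂, Matrix.one_mul]
      _ = U * (Uᵀ * (R * A') * (B'ᵀ * V) * Vᵀ) := by simp only [Matrix.mul_assoc]
  have hR2 : frobSq (X * (A' * B'ᵀ - ΔW)) = frobSq (C * Dᵀ - S) := by
    rw [hXR, Matrix.mul_sub, hSVD,
      show R * (A' * B'ᵀ) - U * S * Vᵀ = U * ((C * Dᵀ - S) * Vᵀ) by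
        rw [hRA, Matrix.sub_mul, Matrix.mul_sub]; simp only [Matrix.mul_assoc],
      frobSq_orthL U hU₁, frobSq_orthR V hV₁]
  rw [hL, hR2]
  exact eckart_young_diag σ hσnn hσmono S Sr hS hSr C D
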